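/- The L_L-formula l(X) = r(X) defines the set of finite subsets of 𝕀 in L(𝕀): for A ∈ P_fci(𝕀), l(A) = r(A) if and only if A is a finite set. -/

import Mathlib

namespace MCpaper

open FirstOrder Language Structure Set

/-- `𝕀`: a dense linear order with a least element `0` and no greatest element,
concretely the nonnegative rationals. -/
abbrev II : Type := NNRat

/-! ### Set-level operations associated to a linear order -/

section SetOps

variable {α : Type*} [LinearOrder α]

/-- The singleton of the least element of `A` (as a set; empty if `A` has no least element). -/
def minSet (A : Set α) : Set α := {i ∈ A | ∀ j ∈ A, i ≤ j}

/-- The singleton of the greatest element of `A` (as a set; empty if `A` has no greatest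
element). -/
def maxSet (A : Set α) : Set α := {i ∈ A | ∀ j ∈ A, j ≤ i}

/-- `sInvSet A B = {i ∈ A : i has a successor in the suborder A and that successor lies in B}`. -/
def sInvSet (A B : Set α) : Set α :=
  {i ∈ A | ∃ j ∈ A, i < j ∧ (∀ k ∈ A, i < k → j ≤ k) ∧ j ∈ B}

lemma minSet_subset (A : Set α) : minSet A ⊆ A := sep_subset _ _

lemma minSet_subsingleton (A : Set α) : (minSet A).Subsingleton :=
  fun x hx y hy => le_antisymm (hx.2 y hy.1) (hy.2 x hx.1)

lemma maxSet_subsingleton (A : Set α) : (maxSet A).Subsingleton :=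
  fun x hx y hy => le_antisymm (hy.2 x hx.1) (hx.2 y hy.1)
lemma maxSet_subset (A : Set α) : maxSet A ⊆ A := sep_subset _ _
lemma sInvSet_subset (A B : Set α) : sInvSet A B ⊆ A := sep_subset _ _

end SetOps

/-! ### The languages -/

/-- Relation symbols of `L_MO = {⊆, ∃<}`. -/
inductive MORel : ℕ → Type
  | sub : MORel 2
  | elt : MORel 2

/-- The language `L_MO = {⊆, ∃<}` with two binary relation symbols. -/
def LMO : Language := ⟨fun _ => Empty, MORel⟩

/-- Function symbols of `L_WSO`. -/
inductive WSOFunc : ℕ → Type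
  | union : WSOFunc 2
  | inter : WSOFunc 2
  | bot : WSOFunc 0
  | zero : WSOFunc 0
  | min : WSOFunc 1
  | max : WSOFunc 1
  | sinv : WSOFunc 2

/-- The language `L_WSO = {∪, ∩, ⊥, 𝟎, min, max, 𝔰⁻¹}`. -/
def LWSO : Language := ⟨WSOFunc, fun _ => Empty⟩

/-- Function symbols of `L_MSOFin`. -/
inductive MSOFinFunc : ℕ → Type
  | union : MSOFinFunc 2
  | inter : MSOFinFunc 2
  | bot : MSOFinFunc 0
  | zero : MSOFinFunc 0
  | zeroStar : MSOFinFunc 0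
  | sinv : MSOFinFunc 1

/-- The language `L_MSOFin = {∪, ∩, ⊥, 𝟎, 𝟎*, s⁻¹}`. -/
def LMSOFin : Language := ⟨MSOFinFunc, fun _ => Empty⟩

/-- Function symbols of `L_L`. -/
inductive LLFunc : ℕ → Type
  | union : LLFunc 2
  | inter : LLFunc 2
  | bot : LLFunc 0
  | zero : LLFunc 0
  | min : LLFunc 1
  | max : LLFunc 1
  | left : LLFunc 1
  | right : LLFunc 1

/-- The language `L_L = {∪, ∩, ⊥, 𝟎, min, max, l, r}`. -/
def LL : Language := ⟨LLFunc, fun _ => Empty⟩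

/-! ### `WSO(𝕀)` as an `L_WSO`-structure and as an `L_MO`-structure -/

/-- The universe of `WSO(𝕀)`: finite subsets of `𝕀`. -/
abbrev FinSub : Type := {A : Set II // A.Finite}

/-- `WSO(𝕀)` as an `L_WSO`-structure. -/
instance finSubLWSO : LWSO.Structure FinSub where
  funMap {n} f :=
    match f with
    | .union => fun v => ⟨(v 0).1 ∪ (v 1).1, (v 0).2.union (v 1).2⟩
    | .inter => fun v => ⟨(v 0).1 ∩ (v 1).1, (v 0).2.inter_of_left _⟩
    | .bot => fun _ => ⟨∅, finite_empty⟩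
    | .zero => fun _ => ⟨{0}, finite_singleton _⟩
    | .min => fun v => ⟨minSet (v 0).1, (v 0).2.subset (minSet_subset _)⟩
    | .max => fun v => ⟨maxSet (v 0).1, (v 0).2.subset (maxSet_subset _)⟩
    | .sinv => fun v => ⟨sInvSet (v 0).1 (v 1).1, (v 0).2.subset (sInvSet_subset _ _)⟩
  RelMap {n} r := Empty.elim r

/-- `WSO(α)` as an `L_MO`-structure, for any linearly ordered `α` (here specialised to `𝕀`). -/
instance finSubLMO : LMO.Structure FinSub where
  funMap {n} f := Empty.elim f
  RelMap {n} r :=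
    match r with
    | .sub => fun v => (v 0).1 ⊆ (v 1).1
    | .elt => fun v => ∃ a ∈ (v 0).1, ∃ b ∈ (v 1).1, a < b

/-- `MSO(α)`: the `L_MO`-structure on the full powerset of a linear order `α`. -/
instance powersetLMO (α : Type*) [LinearOrder α] : LMO.Structure (Set α) where
  funMap {n} f := Empty.elim f
  RelMap {n} r :=
    match r with
    | .sub => fun v => v 0 ⊆ v 1
    | .elt => fun v => ∃ a ∈ v 0, ∃ b ∈ v 1, a < b

/-! ### `MSO(n)` and the pseudofinite theory `T_MSOFin` -/

/-- `MSO(n)` as an `L_MSOFin`-structure on the powerset of `{0, …, n-1}`. -/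
instance msoFinStructure (n : ℕ) : LMSOFin.Structure (Set (Fin n)) where
  funMap {m} f :=
    match f with
    | .union => fun v => v 0 ∪ v 1
    | .inter => fun v => v 0 ∩ v 1
    | .bot => fun _ => ∅
    | .zero => fun _ => {i : Fin n | (i : ℕ) = 0}
    | .zeroStar => fun _ => {i : Fin n | (i : ℕ) = n - 1}
    | .sinv => fun v => {i : Fin n | ∃ j : Fin n, (j : ℕ) = (i : ℕ) + 1 ∧ j ∈ v 0}
  RelMap {m} r := Empty.elim r

/-- The pseudofinite monadic second order theory of linear order: the set of `L_MSOFin`-sentences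
true in `MSO(n)` for every `n`. -/
def TMSOFin : LMSOFin.Theory := {φ : LMSOFin.Sentence | ∀ n : ℕ, Set (Fin n) ⊨ φ}

/-! ### Abstract `L_MO`-structures: atoms and interval restrictions -/

section LMOAbstract

variable {M : Type*} [LMO.Structure M]

/-- The interpretation of `⊆` in an `L_MO`-structure. -/
def mSub (a b : M) : Prop := RelMap (L := LMO) MORel.sub ![a, b]

/-- The interpretation of `∃<` in an `L_MO`-structure. -/
def mLt (a b : M) : Prop := RelMap (L := LMO) MORel.elt ![a, b]

/-- `b` is the least element of the partial order `(M, ⊆)`. -/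
def IsBotM (b : M) : Prop := ∀ x : M, mSub b x

/-- `a` is an atom of `(M, ⊆)`: a minimal element strictly above the least element. -/
def IsAtomM (a : M) : Prop :=
  ∃ b : M, IsBotM b ∧ a ≠ b ∧ ∀ x : M, mSub x a → x = a ∨ x = b

/-- The carrier `{B : M ∣ every atom X ⊆ B satisfies (i ∃< X ∨ X = i) ∧ X ∃< j}`
of the restriction `M ↾ [i,j)`. -/
def intervalRes (i j : M) : Set M :=
  {B : M | ∀ X : M, IsAtomM X → mSub X B → (mLt i X ∨ X = i) ∧ mLt X j}

/-- The `L_MO`-structure induced on a subset of an `L_MO`-structure. -/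
def inducedLMO (s : Set M) : LMO.Structure s where
  funMap {n} f := Empty.elim f
  RelMap {n} r v := RelMap (M := M) r fun k => (v k : M)

end LMOAbstract

/-! ### Abstract `L_WSO`-structures, restrictions to elements -/

section LWSOAbstract

variable {M : Type*} [LWSO.Structure M]

/-- The interpretation of `∪` in an `L_WSO`-structure. -/
def wUnion (a b : M) : M := funMap (L := LWSO) WSOFunc.union ![a, b]

/-- The interpretation of `∩` in an `L_WSO`-structure. -/
def wInter (a b : M) : M := funMap (L := LWSO) WSOFunc.inter ![a, b]

/-- The interpretation of `⊥` in an `L_WSO`-structure. -/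
def wBot : M := funMap (L := LWSO) (M := M) WSOFunc.bot ![]

/-- The interpretation of `𝟎` in an `L_WSO`-structure. -/
def wZero : M := funMap (L := LWSO) (M := M) WSOFunc.zero ![]

/-- The interpretation of `min` in an `L_WSO`-structure. -/
def wMin (a : M) : M := funMap (L := LWSO) WSOFunc.min ![a]

/-- The interpretation of `max` in an `L_WSO`-structure. -/
def wMax (a : M) : M := funMap (L := LWSO) WSOFunc.max ![a]

/-- The interpretation of `𝔰⁻¹` in an `L_WSO`-structure. -/
def wSInv (a b : M) : M := funMap (L := LWSO) WSOFunc.sinv ![a, b]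

variable (M)

/-- The universe `{B : M ∣ B ∩ A = B}` of the restriction `M ↾ A`. -/
def Res (A : M) : Type _ := {B : M // wInter B A = B}

/-- The (true in every model of `Th(WSO(𝕀))`) closure conditions saying that
`{B : M ∣ B ∩ A = B}` is closed under the operations of the restricted structure `M ↾ A`. -/
structure ResClosed (A : M) : Prop where
  union : ∀ B C : M, wInter B A = B → wInter C A = C → wInter (wUnion B C) A = wUnion B C
  inter : ∀ B C : M, wInter B A = B → wInter C A = C → wInter (wInter B C) A = wInter B C
  bot : wInter (wBot : M) A = wBot
  zero : wInter (wMin A) A = wMin A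
  zeroStar : wInter (wMax A) A = wMax A
  sinv : ∀ B : M, wInter B A = B → wInter (wSInv A B) A = wSInv A B

variable {M}

/-- The restriction `M ↾ A` as an `L_MSOFin`-structure: `∪`, `∩`, `⊥` are inherited from `M`,
`𝟎` is `min(A)`, `𝟎*` is `max(A)`, and `s⁻¹` is `B ↦ 𝔰⁻¹(A, B)` computed in `M`. -/
def resStructure {A : M} (hc : ResClosed M A) : LMSOFin.Structure (Res M A) where
  funMap {m} f :=
    match f with
    | .union => fun v => ⟨wUnion (v 0).1 (v 1).1, hc.union _ _ (v 0).2 (v 1).2⟩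
    | .inter => fun v => ⟨wInter (v 0).1 (v 1).1, hc.inter _ _ (v 0).2 (v 1).2⟩
    | .bot => fun _ => ⟨wBot, hc.bot⟩
    | .zero => fun _ => ⟨wMin A, hc.zero⟩
    | .zeroStar => fun _ => ⟨wMax A, hc.zeroStar⟩
    | .sinv => fun v => ⟨wSInv A (v 0).1, hc.sinv _ (v 0).2⟩
  RelMap {m} r := Empty.elim r

/-- `⌊Ā⌋ = 𝟎 ∪ A₁ ∪ … ∪ Aₙ`, computed in `M`. -/
def wFloor {n : ℕ} (A : Fin n → M) : M := (List.ofFn A).foldl wUnion wZero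

end LWSOAbstract

/-! ### Complexity classes of formulas -/

section Complexity

variable {L : Language} {α : Type*}

/-- Positive existential formulas: those built from atomic formulas using only `∧`, `∨`
and `∃`. -/
inductive IsPosEx : {n : ℕ} → L.BoundedFormula α n → Prop
  | equal {n} (t₁ t₂ : L.Term (α ⊕ Fin n)) : IsPosEx (BoundedFormula.equal t₁ t₂)
  | rel {n k} (R : L.Relations k) (ts : Fin k → L.Term (α ⊕ Fin n)) :
      IsPosEx (BoundedFormula.rel R ts)
  | inf {n} {φ ψ : L.BoundedFormula α n} : IsPosEx φ → IsPosEx ψ → IsPosEx (φ ⊓ ψ)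
  | sup {n} {φ ψ : L.BoundedFormula α n} : IsPosEx φ → IsPosEx ψ → IsPosEx (φ ⊔ ψ)
  | ex {n} {φ : L.BoundedFormula α (n + 1)} : IsPosEx φ → IsPosEx φ.ex

/-- Existential formulas: a block of existential quantifiers applied to a
quantifier-free formula. -/
inductive IsExist : {n : ℕ} → L.BoundedFormula α n → Prop
  | of_isQF {n} {φ : L.BoundedFormula α n} : φ.IsQF → IsExist φ
  | ex {n} {φ : L.BoundedFormula α (n + 1)} : IsExist φ → IsExist φ.ex

end Complexity

/-! ### Finite unions of closed intervals and the structure `L(𝕀)` -/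

/-- `A` is a finite union of closed intervals of `𝕀` (each of the form `[i,j]` or `[i,∞)`;
intervals of the form `(-∞, j]` coincide with `[0, j]` since `𝕀` has least element `0`). -/
def IsFCI (A : Set II) : Prop :=
  ∃ (k : ℕ) (f : Fin k → Set II),
    (∀ m : Fin k, (∃ i j : II, f m = Set.Icc i j) ∨ ∃ i : II, f m = Set.Ici i) ∧ A = ⋃ m, f m

/-- The universe of `L(𝕀)`: finite unions of closed intervals of `𝕀`. -/
abbrev FCI : Type := {A : Set II // IsFCI A}

/-- The set of left endpoints of `A`. -/
def lSet (A : Set II) : Set II := {i ∈ A | i = 0 ∨ ∃ i' < i, Set.Ioo i' i ∩ A = ∅}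

/-- The set of right endpoints of `A`. -/
def rSet (A : Set II) : Set II := {i ∈ A | ∃ i'', i < i'' ∧ Set.Ioo i i'' ∩ A = ∅}

lemma isFCI_empty : IsFCI (∅ : Set II) := ⟨0, Fin.elim0, fun m => m.elim0, by simp⟩

lemma isFCI_singleton (i : II) : IsFCI {i} :=
  ⟨1, fun _ => Set.Icc i i, fun _ => Or.inl ⟨i, i, rfl⟩, by simp⟩

lemma IsFCI.union {A B : Set II} (hA : IsFCI A) (hB : IsFCI B) : IsFCI (A ∪ B) := by
  obtain ⟨k, f, hf, rfl⟩ := hA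
  obtain ⟨l, g, hg, rfl⟩ := hB
  refine ⟨k + l, fun m => Sum.elim f g (finSumFinEquiv.symm m), fun m => ?_, ?_⟩
  · dsimp only
    rcases finSumFinEquiv.symm m with i | j
    · exact hf i
    · exact hg j
  · ext x
    simp only [Set.mem_union, Set.mem_iUnion]
    constructor
    · rintro (⟨i, hi⟩ | ⟨j, hj⟩)
      · exact ⟨finSumFinEquiv (Sum.inl i), by simpa using hi⟩
      · exact ⟨finSumFinEquiv (Sum.inr j), by simpa using hj⟩
    · rintro ⟨m, hm⟩
      rcases h : finSumFinEquiv.symm m with i | j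
      · rw [h] at hm; exact Or.inl ⟨i, hm⟩
      · rw [h] at hm; exact Or.inr ⟨j, hm⟩

lemma Icc_inter_Ici' {a b c : II} : Set.Icc a b ∩ Set.Ici c = Set.Icc (a ⊔ c) b := by
  ext x
  simp only [Set.mem_inter_iff, Set.mem_Icc, Set.mem_Ici, sup_le_iff]
  tauto

lemma IsFCI.inter {A B : Set II} (hA : IsFCI A) (hB : IsFCI B) : IsFCI (A ∩ B) := by
  obtain ⟨k, f, hf, rfl⟩ := hA
  obtain ⟨l, g, hg, rfl⟩ := hB
  refine ⟨k * l, fun m => f (finProdFinEquiv.symm m).1 ∩ g (finProdFinEquiv.symm m).2,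
    fun m => ?_, ?_⟩
  · dsimp only
    rcases hf (finProdFinEquiv.symm m).1 with ⟨a, b, hab⟩ | ⟨a, ha⟩ <;>
      rcases hg (finProdFinEquiv.symm m).2 with ⟨c, d, hcd⟩ | ⟨c, hc⟩
    · exact Or.inl ⟨a ⊔ c, b ⊓ d, by rw [hab, hcd, Set.Icc_inter_Icc]⟩
    · exact Or.inl ⟨a ⊔ c, b, by rw [hab, hc, Icc_inter_Ici']⟩
    · exact Or.inl ⟨c ⊔ a, d, by rw [ha, hcd, Set.inter_comm, Icc_inter_Ici']⟩
    · exact Or.inr ⟨a ⊔ c, by rw [ha, hc, Set.Ici_inter_Ici]⟩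
  · ext x
    simp only [Set.mem_inter_iff, Set.mem_iUnion]
    constructor
    · rintro ⟨⟨i, hi⟩, ⟨j, hj⟩⟩
      exact ⟨finProdFinEquiv (i, j), by simpa using ⟨hi, hj⟩⟩
    · rintro ⟨m, hm⟩
      exact ⟨⟨_, hm.1⟩, ⟨_, hm.2⟩⟩

lemma isFCI_minSet (A : Set II) : IsFCI (minSet A) := by
  rcases (minSet_subsingleton A).eq_empty_or_singleton with h | ⟨i, h⟩
  · rw [h]; exact isFCI_empty
  · rw [h]; exact isFCI_singleton i

lemma isFCI_maxSet (A : Set II) : IsFCI (maxSet A) := by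
  rcases (maxSet_subsingleton A).eq_empty_or_singleton with h | ⟨i, h⟩
  · rw [h]; exact isFCI_empty
  · rw [h]; exact isFCI_singleton i

lemma finite_isFCI {A : Set II} (hA : A.Finite) : IsFCI A := by
  induction A, hA using Set.Finite.induction_on
  · exact isFCI_empty
  · rw [Set.insert_eq]; exact (isFCI_singleton _).union (by assumption)

lemma IsFCI.lSet_finite {A : Set II} (hA : IsFCI A) : (lSet A).Finite := by
  obtain ⟨k, f, hf, rfl⟩ := hA
  have hsub : lSet (⋃ m, f m) ⊆ {0} ∪ ⋃ m, minSet (f m) := by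
    rintro i ⟨hiA, hi⟩
    rcases hi with rfl | ⟨i', hi'lt, hgap⟩
    · exact Set.mem_union_left _ rfl
    · obtain ⟨m, him⟩ := Set.mem_iUnion.1 hiA
      refine Set.mem_union_right _ (Set.mem_iUnion.2 ⟨m, him, fun j hj => ?_⟩)
      by_contra hji
      push_neg at hji
      obtain ⟨x, hx1, hx2⟩ := exists_between (max_lt hi'lt hji : max i' j < i)
      have hxfm : x ∈ f m := by
        rcases hf m with ⟨a, b, hab⟩ | ⟨a, ha⟩
        · rw [hab] at him hj ⊢
          exact ⟨hj.1.trans ((le_max_right i' j).trans hx1.le), hx2.le.trans him.2⟩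
        · rw [ha] at hj ⊢
          exact hj.trans ((le_max_right i' j).trans hx1.le)
      have hmem : x ∈ Set.Ioo i' i ∩ ⋃ m, f m :=
        ⟨⟨(le_max_left i' j).trans_lt hx1, hx2⟩, Set.mem_iUnion.2 ⟨m, hxfm⟩⟩
      rw [hgap] at hmem
      exact hmem
  exact ((Set.finite_singleton 0).union
    (Set.finite_iUnion fun m => (minSet_subsingleton (f m)).finite)).subset hsub

lemma IsFCI.rSet_finite {A : Set II} (hA : IsFCI A) : (rSet A).Finite := by
  obtain ⟨k, f, hf, rfl⟩ := hA
  have hsub : rSet (⋃ m, f m) ⊆ ⋃ m, maxSet (f m) := by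
    rintro i ⟨hiA, i'', hi''gt, hgap⟩
    obtain ⟨m, him⟩ := Set.mem_iUnion.1 hiA
    refine Set.mem_iUnion.2 ⟨m, him, fun j hj => ?_⟩
    by_contra hij
    push_neg at hij
    obtain ⟨x, hx1, hx2⟩ := exists_between (lt_min hi''gt hij : i < min i'' j)
    have hxfm : x ∈ f m := by
      rcases hf m with ⟨a, b, hab⟩ | ⟨a, ha⟩
      · rw [hab] at him hj ⊢
        exact ⟨him.1.trans hx1.le, (hx2.le.trans (min_le_right i'' j)).trans hj.2⟩
      · rw [ha] at him ⊢
        exact him.trans hx1.le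
    have hmem : x ∈ Set.Ioo i i'' ∩ ⋃ m, f m :=
      ⟨⟨hx1, hx2.trans_le (min_le_left i'' j)⟩, Set.mem_iUnion.2 ⟨m, hxfm⟩⟩
    rw [hgap] at hmem
    exact hmem
  exact (Set.finite_iUnion fun m => (maxSet_subsingleton (f m)).finite).subset hsub

/-- `L(𝕀)` as an `L_L`-structure. -/
instance fciLL : LL.Structure FCI where
  funMap {m} f :=
    match f with
    | .union => fun v => ⟨(v 0).1 ∪ (v 1).1, (v 0).2.union (v 1).2⟩
    | .inter => fun v => ⟨(v 0).1 ∩ (v 1).1, (v 0).2.inter (v 1).2⟩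
    | .bot => fun _ => ⟨∅, isFCI_empty⟩
    | .zero => fun _ => ⟨{0}, isFCI_singleton 0⟩
    | .min => fun v => ⟨minSet (v 0).1, isFCI_minSet _⟩
    | .max => fun v => ⟨maxSet (v 0).1, isFCI_maxSet _⟩
    | .left => fun v => ⟨lSet (v 0).1, finite_isFCI (v 0).2.lSet_finite⟩
    | .right => fun v => ⟨rSet (v 0).1, finite_isFCI (v 0).2.rSet_finite⟩
  RelMap {m} r := Empty.elim r

universe u v

lemma pos_of_ne_zero' {x : II} (h : x ≠ 0) : 0 < x := lt_of_le_of_ne zero_le (Ne.symm h)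

lemma subset_lSet_of_finite {A : Set II} (hA : A.Finite) : A ⊆ lSet A := by
  intro x hx
  refine ⟨hx, ?_⟩
  rcases eq_or_ne x 0 with rfl | hx0
  · exact Or.inl rfl
  have hx0' : 0 < x := pos_of_ne_zero' hx0
  refine Or.inr ?_
  have hB : {y ∈ A | y < x}.Finite := hA.subset (Set.sep_subset _ _)
  rcases Set.eq_empty_or_nonempty {y ∈ A | y < x} with hBe | hBne
  · refine ⟨0, hx0', ?_⟩
    ext y
    simp only [Set.mem_inter_iff, Set.mem_Ioo, Set.mem_empty_iff_false, iff_false]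
    rintro ⟨⟨hy0, hyx⟩, hyA⟩
    exact Set.eq_empty_iff_forall_notMem.1 hBe y ⟨hyA, hyx⟩
  · obtain ⟨m, hmB, hmax⟩ := Set.Finite.exists_maximalFor id _ hB hBne
    refine ⟨m, hmB.2, ?_⟩
    ext y
    simp only [Set.mem_inter_iff, Set.mem_Ioo, Set.mem_empty_iff_false, iff_false]
    rintro ⟨⟨hmy, hyx⟩, hyA⟩
    exact absurd (hmax (j := y) ⟨hyA, hyx⟩ hmy.le) hmy.not_ge

lemma subset_rSet_of_finite {A : Set II} (hA : A.Finite) : A ⊆ rSet A := by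
  intro x hx
  refine ⟨hx, ?_⟩
  have hB : {y ∈ A | x < y}.Finite := hA.subset (Set.sep_subset _ _)
  rcases Set.eq_empty_or_nonempty {y ∈ A | x < y} with hBe | hBne
  · refine ⟨x + 1, lt_add_of_pos_right x one_pos, ?_⟩
    ext y
    simp only [Set.mem_inter_iff, Set.mem_Ioo, Set.mem_empty_iff_false, iff_false]
    rintro ⟨⟨hxy, _⟩, hyA⟩
    exact Set.eq_empty_iff_forall_notMem.1 hBe y ⟨hyA, hxy⟩
  · obtain ⟨m, hmB, hmin⟩ := Set.Finite.exists_minimalFor id _ hB hBne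
    refine ⟨m, hmB.2, ?_⟩
    ext y
    simp only [Set.mem_inter_iff, Set.mem_Ioo, Set.mem_empty_iff_false, iff_false]
    rintro ⟨⟨hxy, hym⟩, hyA⟩
    exact absurd (hmin (j := y) ⟨hyA, hxy⟩ hym.le) hym.not_ge

/-- If `x ∈ A` is not a left endpoint, some interval of the representation extends to
the left of `x` within `A`. -/
lemma exists_left_ext {k : ℕ} {f : Fin k → Set II} {p : Fin k → (II × II) ⊕ II}
    (hp : ∀ m, f m = Sum.elim (fun q => Set.Icc q.1 q.2) Set.Ici (p m))
    {x : II} (hx : x ∈ ⋃ m, f m) (hxl : x ∉ lSet (⋃ m, f m)) :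
    ∃ m, Sum.elim Prod.fst id (p m) < x ∧
      Set.Icc (Sum.elim Prod.fst id (p m)) x ⊆ ⋃ m, f m := by
  by_contra hcon
  push_neg at hcon
  have hx0 : 0 < x := by
    rcases eq_or_ne x 0 with rfl | h
    · exact absurd ⟨hx, Or.inl rfl⟩ hxl
    · exact pos_of_ne_zero' h
  have hgap : ∀ m : Fin k, ∃ cm, cm < x ∧ Set.Ioo cm x ∩ f m = ∅ := by
    intro m
    rcases hpm : p m with ⟨a, b⟩ | a
    · have hfm : f m = Set.Icc a b := by rw [hp m, hpm]; rfl
      by_cases hax : a < x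
      · by_cases hbx : b < x
        · refine ⟨b, hbx, ?_⟩
          rw [hfm]
          ext y
          simp only [Set.mem_inter_iff, Set.mem_Ioo, Set.mem_Icc, Set.mem_empty_iff_false,
            iff_false]
          rintro ⟨⟨hby, _⟩, _, hyb⟩
          exact absurd hyb (not_le.2 hby)
        · exfalso
          have hlo : Sum.elim Prod.fst id (p m) = a := by rw [hpm]; rfl
          refine absurd ?_ (hcon m (hlo ▸ hax))
          rw [hlo]
          intro y hy
          exact Set.mem_iUnion.2 ⟨m, by rw [hfm]; exact ⟨hy.1, hy.2.trans (not_lt.1 hbx)⟩⟩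
      · refine ⟨0, hx0, ?_⟩
        rw [hfm]
        ext y
        simp only [Set.mem_inter_iff, Set.mem_Ioo, Set.mem_Icc, Set.mem_empty_iff_false,
          iff_false]
        rintro ⟨⟨_, hyx⟩, hay, _⟩
        exact absurd (hyx.trans_le (not_lt.1 hax)) (not_lt.2 hay)
    · have hfm : f m = Set.Ici a := by rw [hp m, hpm]; rfl
      by_cases hax : a < x
      · exfalso
        have hlo : Sum.elim Prod.fst id (p m) = a := by rw [hpm]; rfl
        refine absurd ?_ (hcon m (hlo ▸ hax))
        rw [hlo]
        intro y hy
        exact Set.mem_iUnion.2 ⟨m, by rw [hfm]; exact hy.1⟩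
      · refine ⟨0, hx0, ?_⟩
        rw [hfm]
        ext y
        simp only [Set.mem_inter_iff, Set.mem_Ioo, Set.mem_Ici, Set.mem_empty_iff_false,
          iff_false]
        rintro ⟨⟨_, hyx⟩, hay⟩
        exact absurd (hyx.trans_le (not_lt.1 hax)) (not_lt.2 hay)
  choose c hc1 hc2 using hgap
  refine hxl ⟨hx, Or.inr ⟨Finset.univ.sup c, (Finset.sup_lt_iff hx0).2 fun m _ => hc1 m, ?_⟩⟩
  ext y
  simp only [Set.mem_inter_iff, Set.mem_Ioo, Set.mem_empty_iff_false, iff_false]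
  rintro ⟨⟨hsy, hyx⟩, hyA⟩
  obtain ⟨m, hym⟩ := Set.mem_iUnion.1 hyA
  have : y ∈ Set.Ioo (c m) x ∩ f m :=
    ⟨⟨(Finset.le_sup (Finset.mem_univ m)).trans_lt hsy, hyx⟩, hym⟩
  rw [hc2 m] at this
  exact this

lemma finite_of_lSet_eq_rSet {A : Set II} (hA : IsFCI A) (h : lSet A = rSet A) : A.Finite := by
  by_contra hinf
  obtain ⟨k, f, hf, rfl⟩ := hA
  have hf' : ∀ m, ∃ q : (II × II) ⊕ II,
      f m = Sum.elim (fun q => Set.Icc q.1 q.2) Set.Ici q := by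
    intro m
    rcases hf m with ⟨i, j, hij⟩ | ⟨i, hi⟩
    · exact ⟨Sum.inl (i, j), hij⟩
    · exact ⟨Sum.inr i, hi⟩
  choose p hp using hf'
  set lo : Fin k → II := fun m => Sum.elim Prod.fst id (p m) with hlo
  set A : Set II := ⋃ m, f m with hAdef
  set E : Finset II := Finset.univ.image lo with hE
  -- extract a nondegenerate closed interval inside A
  obtain ⟨a, b, hab, habA⟩ : ∃ a b : II, a < b ∧ Set.Icc a b ⊆ A := by
    obtain ⟨m, hm⟩ : ∃ m, (f m).Infinite := by
      by_contra hc
      push_neg at hc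
      exact hinf (Set.finite_iUnion hc)
    rcases hf m with ⟨i, j, hij⟩ | ⟨i, hi⟩
    · refine ⟨i, j, ?_, fun y hy => Set.mem_iUnion.2 ⟨m, hij ▸ hy⟩⟩
      by_contra hij'
      refine hm (Set.Finite.subset (Set.finite_singleton i) ?_)
      rw [hij]
      intro y hy
      exact Set.mem_singleton_iff.2 (le_antisymm (hy.2.trans (not_lt.1 hij')) hy.1)
    · exact ⟨i, i + 1, lt_add_of_pos_right i one_pos,
        fun y hy => Set.mem_iUnion.2 ⟨m, hi ▸ hy.1⟩⟩
  -- descent: find a left endpoint whose interval extends to b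
  have main : ∀ n : ℕ, ∀ x : II, (E.filter (fun e => e < x)).card ≤ n →
      x < b → Set.Icc x b ⊆ A → ∃ z, z ∈ lSet A ∧ z < b ∧ Set.Icc z b ⊆ A := by
    intro n
    induction n with
    | zero =>
      intro x hcard hxb hxA
      by_cases hxl : x ∈ lSet A
      · exact ⟨x, hxl, hxb, hxA⟩
      · obtain ⟨m, hm1, hm2⟩ := exists_left_ext hp (hxA ⟨le_refl x, hxb.le⟩) hxl
        have hmem : lo m ∈ E.filter (fun e => e < x) :=
          Finset.mem_filter.2 ⟨Finset.mem_image.2 ⟨m, Finset.mem_univ m, rfl⟩, hm1⟩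
        rw [Finset.card_eq_zero.1 (Nat.le_zero.1 hcard)] at hmem
        exact absurd hmem (Finset.notMem_empty _)
    | succ n ih =>
      intro x hcard hxb hxA
      by_cases hxl : x ∈ lSet A
      · exact ⟨x, hxl, hxb, hxA⟩
      · obtain ⟨m, hm1, hm2⟩ := exists_left_ext hp (hxA ⟨le_refl x, hxb.le⟩) hxl
        set c := lo m with hc
        have hcE : c ∈ E.filter (fun e => e < x) :=
          Finset.mem_filter.2 ⟨Finset.mem_image.2 ⟨m, Finset.mem_univ m, hc.symm⟩, hm1⟩
        have hsubset : E.filter (fun e => e < c) ⊆ E.filter (fun e => e < x) := by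
          intro e he
          rw [Finset.mem_filter] at he ⊢
          exact ⟨he.1, he.2.trans hm1⟩
        have hsub : E.filter (fun e => e < c) ⊂ E.filter (fun e => e < x) :=
          (Finset.ssubset_iff_of_subset hsubset).2
            ⟨c, hcE, fun hcc => absurd (Finset.mem_filter.1 hcc).2 (lt_irrefl c)⟩
        have hcard' : (E.filter (fun e => e < c)).card ≤ n :=
          Nat.lt_succ_iff.1 ((Finset.card_lt_card hsub).trans_le hcard)
        refine ih c hcard' (hm1.trans hxb) ?_
        intro y hy
        rcases le_total y x with hyx | hxy
        · exact hm2 ⟨hy.1, hyx⟩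
        · exact hxA ⟨hxy, hy.2⟩
  obtain ⟨z, hzl, hzb, hzA⟩ := main E.card a (Finset.card_filter_le _ _) hab habA
  rw [h] at hzl
  obtain ⟨hzA', i'', hzi, hgap⟩ := hzl
  obtain ⟨y, hy1, hy2⟩ := exists_between (lt_min hzb hzi)
  have : y ∈ Set.Ioo z i'' ∩ A :=
    ⟨⟨hy1, hy2.trans_le (min_le_right _ _)⟩, hzA ⟨hy1.le, (hy2.trans_le (min_le_left _ _)).le⟩⟩
  rw [hgap] at this
  exact this

/-- The `L_L`-formula `l(X) = r(X)` defines the set of finite subsets of `𝕀`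
in `L(𝕀)`: for `A ∈ P_fci(𝕀)`, `l(A) = r(A)` if and only if `A` is a finite set. -/
theorem lSet_eq_rSet_iff_finite (A : FCI) : lSet A.1 = rSet A.1 ↔ A.1.Finite := by
  constructor
  · exact fun h => finite_of_lSet_eq_rSet A.2 h
  · intro hfin
    have h1 : lSet A.1 = A.1 :=
      le_antisymm (Set.sep_subset _ _) (subset_lSet_of_finite hfin)
    have h2 : rSet A.1 = A.1 :=
      le_antisymm (Set.sep_subset _ _) (subset_rSet_of_finite hfin)
    rw [h1, h2]

end MCpaper
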